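/- Let α < 0 and let C : ℝ → ℝⁿ be an arclength-parametrized rotating-shrinking soliton (C'' = (α+A)C + λ C', A antisymmetric). If at some s₀ we have ‖C(s₀)‖² = -1/α and (d/ds)‖C(s)‖²|_{s=s₀} = 0, then ‖C(s)‖² = -1/α for all s ∈ ℝ; i.e. the soliton lies entirely on the sphere of radius (-α)^{-1/2}. -/

import Mathlib

open Matrix
open scoped RealInnerProductSpace

set_option maxHeartbeats 1000000 in
theorem stmt7 (n : ℕ) (α : ℝ) (hα : α < 0)
    (A : Matrix (Fin n) (Fin n) ℝ) (hA : Aᵀ = -A)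
    (C : ℝ → EuclideanSpace ℝ (Fin n)) (lam : ℝ → ℝ)
    (hC : ContDiff ℝ 2 C)
    (harc : ∀ s, ‖deriv C s‖ = 1)
    (hlam : ∀ s, lam s = -⟪α • C s + A.toEuclideanLin (C s), deriv C s⟫)
    (heq : ∀ s, deriv (deriv C) s
      = α • C s + A.toEuclideanLin (C s) + lam s • deriv C s)
    (s₀ : ℝ) (h1 : ‖C s₀‖ ^ 2 = -1 / α)
    (h2 : deriv (fun s => ‖C s‖ ^ 2) s₀ = 0) :
    ∀ s, ‖C s‖ ^ 2 = -1 / α := by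
  have hα0 : α ≠ 0 := ne_of_lt hα
  have hCd : Differentiable ℝ C := hC.differentiable (by norm_num)
  have hC1 : ContDiff ℝ 1 (deriv C) := by
    have h2' : ContDiff ℝ ((1 : ℕ) + 1) C := by exact_mod_cast hC
    exact (contDiff_succ_iff_deriv.mp h2').2.2
  have hC'd : Differentiable ℝ (deriv C) := hC1.differentiable one_ne_zero
  -- skew-symmetry kills the A-term
  have hskew : ∀ x : EuclideanSpace ℝ (Fin n), ⟪x, A.toEuclideanLin x⟫ = 0 := by
    intro x
    have hadj : Matrix.toEuclideanLin Aᵀ = LinearMap.adjoint (Matrix.toEuclideanLin A) := by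
      have := Matrix.toEuclideanLin_conjTranspose_eq_adjoint A
      rw [Matrix.conjTranspose_eq_transpose_of_trivial] at this; exact this
    have h1 : ⟪x, LinearMap.adjoint (Matrix.toEuclideanLin A) x⟫ = ⟪A.toEuclideanLin x, x⟫ :=
      LinearMap.adjoint_inner_right _ _ _
    rw [← hadj, hA] at h1
    simp only [map_neg, LinearMap.neg_apply, inner_neg_right] at h1
    have h2' : ⟪A.toEuclideanLin x, x⟫ = ⟪x, A.toEuclideanLin x⟫ := real_inner_comm _ _
    linarith [h1, h2']
  set φ : ℝ → ℝ := fun s => ⟪C s, C s⟫ with hφdef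
  set ψ : ℝ → ℝ := fun s => 2 * ⟪C s, deriv C s⟫ with hψdef
  have hnorm : ∀ s, ‖C s‖ ^ 2 = φ s := fun s => (real_inner_self_eq_norm_sq (C s)).symm
  have hCder : ∀ s, HasDerivAt C (deriv C s) s := fun s => (hCd s).hasDerivAt
  have hC'der : ∀ s, HasDerivAt (deriv C) (deriv (deriv C) s) s := fun s => (hC'd s).hasDerivAt
  have hφder : ∀ s, HasDerivAt φ (ψ s) s := by
    intro s
    have := (hCder s).inner ℝ (hCder s)
    have hcomm : ⟪C s, deriv C s⟫ + ⟪deriv C s, C s⟫ = ψ s := by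
      simp only [hψdef]; rw [real_inner_comm (deriv C s) (C s)]; ring
    rw [hcomm] at this
    exact this
  have hψder : ∀ s, HasDerivAt ψ (2 * α * (φ s + 1/α) + lam s * ψ s) s := by
    intro s
    have hin := (hCder s).inner ℝ (hC'der s)
    have hval : ⟪C s, deriv (deriv C) s⟫ + ⟪deriv C s, deriv C s⟫
        = α * φ s + lam s * ⟪C s, deriv C s⟫ + 1 := by
      rw [heq s]
      have h1 : ⟪deriv C s, deriv C s⟫ = 1 := by
        rw [real_inner_self_eq_norm_sq, harc s]; norm_num
      rw [h1]
      rw [inner_add_right, inner_add_right, real_inner_smul_right, real_inner_smul_right,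
        hskew (C s)]
      ring
    rw [hval] at hin
    have := hin.const_mul (2 : ℝ)
    convert this using 1
    · rfl
    · rfl
    simp only [hψdef, hφdef]
    field_simp
    ring
  have hφcont : Continuous φ := continuous_iff_continuousAt.mpr fun s => (hφder s).continuousAt
  have hψcont : Continuous ψ := continuous_iff_continuousAt.mpr fun s => (hψder s).continuousAt
  -- lam is continuous
  have hlamc : Continuous lam := by
    have : lam = fun s => -⟪α • C s + A.toEuclideanLin (C s), deriv C s⟫ := funext hlam
    rw [this]
    have hAc : Continuous fun s => A.toEuclideanLin (C s) :=
      (LinearMap.continuous_of_finiteDimensional _).comp hC.continuous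
    exact (((hC.continuous.const_smul α).add hAc).inner
      (hC.continuous_deriv (by norm_num))).neg
  -- initial conditions
  have hφ0 : φ s₀ = -1 / α := by rw [← hnorm]; exact h1
  have hψ0 : ψ s₀ = 0 := by
    have : deriv (fun s => ‖C s‖ ^ 2) s₀ = ψ s₀ := by
      have heqf : (fun s => ‖C s‖ ^ 2) = φ := funext hnorm
      rw [heqf]; exact (hφder s₀).deriv
    rw [← this, h2]
  -- main argument: for each s₁, use ODE uniqueness on an interval containing s₀ and s₁
  intro s₁
  set a : ℝ := min s₁ s₀ - 1 with ha_def
  set b : ℝ := max s₁ s₀ + 1 with hb_def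
  have hab : a ≤ b := by
    have := min_le_max (a := s₁) (b := s₀); simp only [ha_def, hb_def]; linarith
  obtain ⟨M, hM⟩ : ∃ M, ∀ t ∈ Set.Icc a b, ‖lam t‖ ≤ M :=
    isCompact_Icc.exists_bound_of_continuousOn hlamc.continuousOn
  set M' : ℝ := max M 0 with hM'def
  have hM'0 : 0 ≤ M' := le_max_right _ _
  -- clamped lam: equals lam on [a,b], globally bounded by M'
  set lam' : ℝ → ℝ := fun t => lam (max a (min t b)) with hlam'def
  have hlam'eq : ∀ t ∈ Set.Icc a b, lam' t = lam t := by
    intro t ht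
    simp only [hlam'def, min_eq_left ht.2, max_eq_right ht.1]
  have hlam'bd : ∀ t, |lam' t| ≤ M' := by
    intro t
    have hmem : max a (min t b) ∈ Set.Icc a b := by
      constructor
      · exact le_max_left _ _
      · exact max_le hab (min_le_right _ _)
    calc |lam' t| = ‖lam (max a (min t b))‖ := rfl
      _ ≤ M := hM _ hmem
      _ ≤ M' := le_max_left _ _
  -- the vector field
  set v : ℝ → ℝ × ℝ → ℝ × ℝ := fun t x => (x.2, 2 * α * x.1 + lam' t * x.2) with hvdef
  set Kr : ℝ := 1 + 2 * |α| + M' with hKrdef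
  have hKr0 : 0 ≤ Kr := by positivity
  set K : NNReal := ⟨Kr, hKr0⟩ with hKdef
  have hvLip : ∀ t, LipschitzWith K (v t) := by
    intro t
    apply LipschitzWith.of_dist_le_mul
    intro x y
    have hd : dist x y = max (dist x.1 y.1) (dist x.2 y.2) := Prod.dist_eq
    have h1 : dist x.1 y.1 ≤ dist x y := by rw [hd]; exact le_max_left _ _
    have h2' : dist x.2 y.2 ≤ dist x y := by rw [hd]; exact le_max_right _ _
    have hd0 : 0 ≤ dist x y := dist_nonneg
    have hK1 : (K : ℝ) = Kr := rfl
    rw [hK1, Prod.dist_eq]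
    apply max_le
    · calc dist (v t x).1 (v t y).1 = dist x.2 y.2 := rfl
        _ ≤ dist x y := h2'
        _ ≤ Kr * dist x y := by nlinarith [abs_nonneg α, hM'0]
    · have : dist (v t x).2 (v t y).2
          = |2 * α * (x.1 - y.1) + lam' t * (x.2 - y.2)| := by
        simp only [hvdef, Real.dist_eq]; ring_nf
      rw [this]
      have e1 : |2 * α * (x.1 - y.1)| ≤ 2 * |α| * dist x y := by
        rw [abs_mul, abs_mul]
        have : |x.1 - y.1| = dist x.1 y.1 := (Real.dist_eq _ _).symm
        rw [this]
        have h2α : |(2:ℝ)| = 2 := by norm_num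
        rw [h2α]
        nlinarith [abs_nonneg α, dist_nonneg (x := x.1) (y := y.1)]
      have e2 : |lam' t * (x.2 - y.2)| ≤ M' * dist x y := by
        rw [abs_mul]
        have : |x.2 - y.2| = dist x.2 y.2 := (Real.dist_eq _ _).symm
        rw [this]
        nlinarith [hlam'bd t, abs_nonneg (lam' t), dist_nonneg (x := x.2) (y := y.2)]
      calc |2 * α * (x.1 - y.1) + lam' t * (x.2 - y.2)|
          ≤ |2 * α * (x.1 - y.1)| + |lam' t * (x.2 - y.2)| := abs_add_le _ _
        _ ≤ 2 * |α| * dist x y + M' * dist x y := add_le_add e1 e2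
        _ ≤ Kr * dist x y := by nlinarith
  -- the two solutions
  set f : ℝ → ℝ × ℝ := fun t => (φ t + 1/α, ψ t) with hfdef
  set f0 : ℝ → ℝ × ℝ := fun _ => ((0:ℝ), (0:ℝ)) with hf0def
  have hfderiv : ∀ t ∈ Set.Ioo a b, HasDerivAt f (v t (f t)) t := by
    intro t ht
    have hg : HasDerivAt (fun u => φ u + 1/α) (ψ t) t := (hφder t).add_const _
    have hψ' : HasDerivAt ψ (2 * α * (φ t + 1/α) + lam t * ψ t) t := hψder t
    have hve : v t (f t) = (ψ t, 2 * α * (φ t + 1/α) + lam t * ψ t) := by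
      simp only [hvdef, hfdef]
      rw [hlam'eq t (Set.mem_Icc_of_Ioo ht)]
    rw [hve]
    exact hg.prodMk hψ'
  have hf0deriv : ∀ t ∈ Set.Ioo a b, HasDerivAt f0 (v t (f0 t)) t := by
    intro t _
    have hz : v t (f0 t) = ((0:ℝ), (0:ℝ)) := by simp [hvdef, hf0def]
    rw [hz]
    exact hasDerivAt_const _ _
  have hinit : f s₀ = f0 s₀ := by
    simp only [hfdef, hf0def, hφ0, hψ0, Prod.mk.injEq]
    constructor
    · field_simp; ring
    · trivial
  have hs₀mem : s₀ ∈ Set.Ioo a b := by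
    have h01 := min_le_right s₁ s₀
    have h02 := le_max_right s₁ s₀
    constructor
    · simp only [ha_def]; linarith
    · simp only [hb_def]; linarith
  have hfc : ContinuousOn f (Set.Icc a b) :=
    ((hφcont.add continuous_const).prodMk hψcont).continuousOn
  have hf0c : ContinuousOn f0 (Set.Icc a b) := continuous_const.continuousOn
  have huniq := ODE_solution_unique_of_mem_Icc (fun t _ => (hvLip t).lipschitzOnWith) hs₀mem
    hfc hfderiv (fun _ _ => Set.mem_univ _) hf0c hf0deriv (fun _ _ => Set.mem_univ _) hinit
  have hs₁mem : s₁ ∈ Set.Icc a b := by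
    have h01 := min_le_left s₁ s₀
    have h02 := le_max_left s₁ s₀
    constructor
    · simp only [ha_def]; linarith
    · simp only [hb_def]; linarith
  have hfs₁ := huniq hs₁mem
  have hφs₁ : φ s₁ + 1/α = 0 := congrArg Prod.fst hfs₁
  rw [hnorm s₁]
  have hneg : -1 / α = -(1 / α) := by ring
  rw [hneg]
  linarith
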